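/- Let (a_n)_{n≥1} be any sequence in the open unit disk, with Blaschke products (B_n) and MT functions (φ_n). Then for every n ≥ 1 and all real x, y with e^{ix} ≠ e^{iy}, the Christoffel–Darboux identity holds: ∑_{j=0}^{n−1} φ_j(e^{ix})·conj(φ_j(e^{iy})) = (B_n(e^{ix})·conj(B_n(e^{iy})) − 1)/(e^{i(x−y)} − 1). Consequently, for every f ∈ L²(𝕋) and every real x, ∑_{j=0}^{n−1} ⟨f, φ_j⟩·φ_j(e^{ix}) = (1/2π)∫_{−π}^{π} f(e^{iy})·(B_n(e^{ix})·conj(B_n(e^{iy})) − 1)/(e^{i(x−y)} − 1) dy, the integrand being a bounded measurable function of y. -/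

import Mathlib

open MeasureTheory Real Set Filter

noncomputable section

/-- Möbius/Blaschke factor, with the convention that the factor is `z` when `a = 0`. -/
def blaschkeFactor (a z : ℂ) : ℂ :=
  if a = 0 then z
  else (starRingEnd ℂ a / ‖a‖) * ((z - a) / (1 - starRingEnd ℂ a * z))

/-- Blaschke product `B_n(z) = ∏_{j=1}^n` of the factors of the sequence `a`. -/
def blaschkeProd (a : ℕ → ℂ) (n : ℕ) (z : ℂ) : ℂ :=
  ∏ j ∈ Finset.Icc 1 n, blaschkeFactor (a j) z

/-- Malmquist–Takenaka function `φ_n`. -/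
def mtFun (a : ℕ → ℂ) (n : ℕ) (z : ℂ) : ℂ :=
  blaschkeProd a n z *
    ((Real.sqrt (1 - ‖a (n + 1)‖ ^ 2) : ℂ) / (1 - starRingEnd ℂ (a (n + 1)) * z))

/-- Inner product `(1/2π)∫_{-π}^{π} f(θ) conj (g(θ)) dθ` on the circle. -/
def circInner (f g : ℝ → ℂ) : ℂ :=
  (1 / (2 * Real.pi)) * ∫ θ in (-Real.pi)..Real.pi, f θ * starRingEnd ℂ (g θ)

/-- MT coefficient `⟨f, φ_j⟩`. -/
def mtCoeff (a : ℕ → ℂ) (f : ℝ → ℂ) (j : ℕ) : ℂ :=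
  circInner f (fun θ => mtFun a j (Complex.exp (θ * Complex.I)))

/-- Partial sum `∑_{j=0}^{n} ⟨f, φ_j⟩ φ_j(e^{ix})` of the MT series. -/
def mtPartial (a : ℕ → ℂ) (f : ℝ → ℂ) (n : ℕ) (x : ℝ) : ℂ :=
  ∑ j ∈ Finset.range (n + 1), mtCoeff a f j * mtFun a j (Complex.exp (x * Complex.I))

lemma conj_blaschkeFactor (a w : ℂ) :
    starRingEnd ℂ (blaschkeFactor a w)
      = blaschkeFactor (starRingEnd ℂ a) (starRingEnd ℂ w) := by
  by_cases h : a = 0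
  · simp [h, blaschkeFactor]
  · have h' : starRingEnd ℂ a ≠ 0 := by simpa using h
    simp only [blaschkeFactor, if_neg h, if_neg h', map_mul, map_div₀, map_sub, map_one,
      Complex.conj_conj, Complex.conj_ofReal, Complex.norm_conj]

lemma conj_blaschkeProd (a : ℕ → ℂ) (n : ℕ) (w : ℂ) :
    starRingEnd ℂ (blaschkeProd a n w)
      = blaschkeProd (fun k => starRingEnd ℂ (a k)) n (starRingEnd ℂ w) := by
  simp only [blaschkeProd, map_prod, conj_blaschkeFactor]

lemma conj_mtFun (a : ℕ → ℂ) (n : ℕ) (w : ℂ) :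
    starRingEnd ℂ (mtFun a n w)
      = mtFun (fun k => starRingEnd ℂ (a k)) n (starRingEnd ℂ w) := by
  simp only [mtFun, map_mul, map_div₀, map_sub, map_one, conj_blaschkeProd,
    Complex.conj_ofReal, Complex.conj_conj, Complex.norm_conj]

lemma one_sub_ne (a z : ℂ) (ha : ‖a‖ < 1) (hz : ‖z‖ = 1) :
    1 - a * z ≠ 0 := by
  intro h
  have h1 : a * z = 1 := (sub_eq_zero.mp h).symm
  have := congrArg norm h1
  simp [norm_mul, hz] at this
  exact absurd this (ne_of_lt ha)

lemma factor_identity (a z W : ℂ) (ha : ‖a‖ < 1) (hz : ‖z‖ = 1)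
    (hW : ‖W‖ = 1) :
    (1 - blaschkeFactor a z * blaschkeFactor (starRingEnd ℂ a) W) *
        ((1 - starRingEnd ℂ a * z) * (1 - a * W))
      = (1 - (‖a‖ : ℂ) ^ 2) * (1 - z * W) := by
  by_cases h : a = 0
  · simp [h, blaschkeFactor]
  · have h' : starRingEnd ℂ a ≠ 0 := by simpa using h
    have hz' : 1 - starRingEnd ℂ a * z ≠ 0 :=
      one_sub_ne _ _ (by simpa [Complex.norm_conj] using ha) hz
    have hW' : 1 - a * W ≠ 0 := one_sub_ne _ _ ha hW
    have h1 : ‖a‖ ≠ 0 := fun hh => h (norm_eq_zero.mp hh)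
    have habs : (‖a‖ : ℂ) ≠ 0 := Complex.ofReal_ne_zero.mpr h1
    have hsq : starRingEnd ℂ a * a = (‖a‖ : ℂ) ^ 2 := by
      rw [mul_comm, Complex.mul_conj]
      norm_cast
      rw [Complex.sq_norm]
    have hprod : blaschkeFactor a z * blaschkeFactor (starRingEnd ℂ a) W
        = ((z - a) * (W - starRingEnd ℂ a)) /
            ((1 - starRingEnd ℂ a * z) * (1 - a * W)) := by
      simp only [blaschkeFactor, if_neg h, if_neg h', Complex.conj_conj, Complex.norm_conj]
      have e : starRingEnd ℂ a / (‖a‖ : ℂ) * (a / (‖a‖ : ℂ)) = 1 := by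
        rw [div_mul_div_comm, hsq, sq, div_self (mul_ne_zero habs habs)]
      calc _ = (starRingEnd ℂ a / (‖a‖ : ℂ) * (a / (‖a‖ : ℂ))) *
            ((z - a) / (1 - starRingEnd ℂ a * z) * ((W - starRingEnd ℂ a) / (1 - a * W))) := by ring
        _ = _ := by rw [e, one_mul, div_mul_div_comm]
    rw [hprod, ← hsq]
    rw [sub_mul, div_mul_cancel₀ _ (mul_ne_zero hz' hW')]
    ring

lemma telescope (a : ℕ → ℂ) (ha : ∀ n : ℕ, 1 ≤ n → ‖a n‖ < 1) (j : ℕ)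
    (z W : ℂ) (hz : ‖z‖ = 1) (hW : ‖W‖ = 1) :
    mtFun a j z * mtFun (fun k => starRingEnd ℂ (a k)) j W * (1 - z * W)
      = blaschkeProd a j z * blaschkeProd (fun k => starRingEnd ℂ (a k)) j W
        - blaschkeProd a (j + 1) z * blaschkeProd (fun k => starRingEnd ℂ (a k)) (j + 1) W := by
  have hA : ‖a (j + 1)‖ < 1 := ha (j + 1) (by omega)
  have hz' : 1 - starRingEnd ℂ (a (j + 1)) * z ≠ 0 :=
    one_sub_ne _ _ (by simpa [Complex.norm_conj] using hA) hz
  have hW' : 1 - a (j + 1) * W ≠ 0 := one_sub_ne _ _ hA hW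
  have hs : ((Real.sqrt (1 - ‖a (j + 1)‖ ^ 2) : ℝ) : ℂ) ^ 2
      = 1 - (‖a (j + 1)‖ : ℂ) ^ 2 := by
    have h0 : (0 : ℝ) ≤ 1 - ‖a (j + 1)‖ ^ 2 := by
      nlinarith [norm_nonneg (a (j + 1))]
    norm_cast
    exact Real.sq_sqrt h0
  have key := factor_identity (a (j + 1)) z W hA hz hW
  have hstep_z : blaschkeProd a (j + 1) z
      = blaschkeProd a j z * blaschkeFactor (a (j + 1)) z := by
    rw [blaschkeProd, Finset.prod_Icc_succ_top (Nat.le_add_left 1 j)]; rfl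
  have hstep_W : blaschkeProd (fun k => starRingEnd ℂ (a k)) (j + 1) W
      = blaschkeProd (fun k => starRingEnd ℂ (a k)) j W
          * blaschkeFactor (starRingEnd ℂ (a (j + 1))) W := by
    rw [blaschkeProd, Finset.prod_Icc_succ_top (Nat.le_add_left 1 j)]; rfl
  rw [hstep_z, hstep_W]
  simp only [mtFun, Complex.norm_conj, Complex.conj_conj]
  field_simp
  linear_combination
    (-(blaschkeProd a j z * blaschkeProd (fun k => starRingEnd ℂ (a k)) j W)) * key
      + (blaschkeProd a j z * blaschkeProd (fun k => starRingEnd ℂ (a k)) j W * (1 - z * W)) * hs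

lemma cd_sum (a : ℕ → ℂ) (ha : ∀ n : ℕ, 1 ≤ n → ‖a n‖ < 1) (n : ℕ)
    (z W : ℂ) (hz : ‖z‖ = 1) (hW : ‖W‖ = 1) :
    (∑ j ∈ Finset.range n, mtFun a j z * mtFun (fun k => starRingEnd ℂ (a k)) j W)
        * (1 - z * W)
      = 1 - blaschkeProd a n z * blaschkeProd (fun k => starRingEnd ℂ (a k)) n W := by
  rw [Finset.sum_mul]
  rw [Finset.sum_congr rfl (fun j _ => telescope a ha j z W hz hW)]
  rw [Finset.sum_range_sub' (fun j => blaschkeProd a j z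
      * blaschkeProd (fun k => starRingEnd ℂ (a k)) j W) n]
  simp [blaschkeProd]

lemma cd_main (a : ℕ → ℂ) (ha : ∀ n : ℕ, 1 ≤ n → ‖a n‖ < 1) (n : ℕ)
    (x y : ℝ)
    (hxy : Complex.exp ((x : ℂ) * Complex.I) ≠ Complex.exp ((y : ℂ) * Complex.I)) :
    ∑ j ∈ Finset.range n,
        mtFun a j (Complex.exp ((x : ℂ) * Complex.I)) *
          starRingEnd ℂ (mtFun a j (Complex.exp ((y : ℂ) * Complex.I)))
      = (blaschkeProd a n (Complex.exp ((x : ℂ) * Complex.I)) *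
          starRingEnd ℂ (blaschkeProd a n (Complex.exp ((y : ℂ) * Complex.I))) - 1) /
          (Complex.exp (((x - y : ℝ) : ℂ) * Complex.I) - 1) := by
  have hz : ‖Complex.exp ((x : ℂ) * Complex.I)‖ = 1 :=
    Complex.norm_exp_ofReal_mul_I x
  have hW : ‖starRingEnd ℂ (Complex.exp ((y : ℂ) * Complex.I))‖ = 1 := by
    rw [Complex.norm_conj]; exact Complex.norm_exp_ofReal_mul_I y
  have hzW : Complex.exp ((x : ℂ) * Complex.I) * starRingEnd ℂ (Complex.exp ((y : ℂ) * Complex.I))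
      = Complex.exp (((x - y : ℝ) : ℂ) * Complex.I) := by
    rw [← Complex.exp_conj, ← Complex.exp_add]
    congr 1
    simp [map_mul, Complex.conj_ofReal, Complex.conj_I]
    ring
  have hne : Complex.exp (((x - y : ℝ) : ℂ) * Complex.I) ≠ 1 := by
    intro h
    apply hxy
    have h2 : Complex.exp ((x : ℂ) * Complex.I)
        = Complex.exp (((x - y : ℝ) : ℂ) * Complex.I) * Complex.exp ((y : ℂ) * Complex.I) := by
      rw [← Complex.exp_add]; congr 1; push_cast; ring
    rw [h2, h, one_mul]
  have hsum := cd_sum a ha n _ _ hz hW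
  rw [hzW] at hsum
  simp only [conj_mtFun, conj_blaschkeProd]
  rw [eq_div_iff (sub_ne_zero.mpr hne)]
  linear_combination -hsum

lemma mtFun_exp_continuous (a : ℕ → ℂ) (ha : ∀ n : ℕ, 1 ≤ n → ‖a n‖ < 1)
    (j : ℕ) : Continuous (fun y : ℝ => mtFun a j (Complex.exp ((y : ℂ) * Complex.I))) := by
  have hexp : Continuous fun y : ℝ => Complex.exp ((y : ℂ) * Complex.I) :=
    Complex.continuous_exp.comp ((Complex.continuous_ofReal.mul continuous_const))
  have hfac : ∀ b : ℂ, ‖b‖ < 1 →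
      Continuous (fun y : ℝ => blaschkeFactor b (Complex.exp ((y : ℂ) * Complex.I))) := by
    intro b hb
    by_cases h : b = 0
    · simpa [blaschkeFactor, h] using hexp
    · simp only [blaschkeFactor, if_neg h]
      refine continuous_const.mul ?_
      refine (hexp.sub continuous_const).div (continuous_const.sub (continuous_const.mul hexp)) ?_
      intro y
      exact one_sub_ne _ _ (by simpa [Complex.norm_conj] using hb) (Complex.norm_exp_ofReal_mul_I y)
  have hprod : Continuous
      (fun y : ℝ => blaschkeProd a j (Complex.exp ((y : ℂ) * Complex.I))) := by
    simp only [blaschkeProd]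
    apply continuous_finset_prod
    intro k hk
    exact hfac (a k) (ha k (Finset.mem_Icc.mp hk).1)
  refine hprod.mul ?_
  refine continuous_const.div (continuous_const.sub (continuous_const.mul hexp)) ?_
  intro y
  exact one_sub_ne _ _ (by simpa [Complex.norm_conj] using ha (j + 1) (by omega))
    (Complex.norm_exp_ofReal_mul_I y)

/-- Christoffel–Darboux identity for the Malmquist–Takenaka system, and
the resulting kernel representation of the partial sum operator. -/
theorem mt_christoffel_darboux
    (a : ℕ → ℂ) (ha : ∀ n : ℕ, 1 ≤ n → ‖a n‖ < 1)
    (n : ℕ) (hn : 1 ≤ n) :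
    (∀ x y : ℝ, Complex.exp ((x : ℂ) * Complex.I) ≠ Complex.exp ((y : ℂ) * Complex.I) →
      ∑ j ∈ Finset.range n,
          mtFun a j (Complex.exp ((x : ℂ) * Complex.I)) *
            starRingEnd ℂ (mtFun a j (Complex.exp ((y : ℂ) * Complex.I)))
        = (blaschkeProd a n (Complex.exp ((x : ℂ) * Complex.I)) *
            starRingEnd ℂ (blaschkeProd a n (Complex.exp ((y : ℂ) * Complex.I))) - 1) /
            (Complex.exp (((x - y : ℝ) : ℂ) * Complex.I) - 1)) ∧
    (∀ f : ℝ → ℂ, MemLp f 2 (volume.restrict (Set.Icc (-Real.pi) Real.pi)) →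
      ∀ x : ℝ,
        ∑ j ∈ Finset.range n, mtCoeff a f j * mtFun a j (Complex.exp ((x : ℂ) * Complex.I))
          = (1 / (2 * Real.pi) : ℂ) *
              ∫ y in (-Real.pi)..Real.pi,
                f y *
                  ((blaschkeProd a n (Complex.exp ((x : ℂ) * Complex.I)) *
                      starRingEnd ℂ (blaschkeProd a n (Complex.exp ((y : ℂ) * Complex.I))) - 1) /
                    (Complex.exp (((x - y : ℝ) : ℂ) * Complex.I) - 1))) := by
  constructor
  · exact fun x y h => cd_main a ha n x y h
  · intro f hf x
    haveI : IsFiniteMeasure (volume.restrict (Set.Icc (-Real.pi) Real.pi)) := by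
      constructor
      rw [Measure.restrict_apply_univ]
      exact measure_Icc_lt_top
    have hfInt : IntervalIntegrable f volume (-Real.pi) Real.pi := by
      rw [intervalIntegrable_iff]
      have h1 : IntegrableOn f (Set.Icc (-Real.pi) Real.pi) volume :=
        hf.integrable (by norm_num)
      refine h1.mono_set ?_
      rw [Set.uIoc_of_le (by linarith [Real.pi_pos])]
      exact Set.Ioc_subset_Icc_self
    set z := Complex.exp ((x : ℂ) * Complex.I) with hz
    have hInt : ∀ j ∈ Finset.range n, IntervalIntegrable
        (fun y : ℝ => f y * (starRingEnd ℂ (mtFun a j (Complex.exp ((y : ℂ) * Complex.I))) *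
          mtFun a j z)) volume (-Real.pi) Real.pi := by
      intro j _
      apply hfInt.mul_continuousOn
      exact (((Complex.continuous_conj.comp (mtFun_exp_continuous a ha j)).mul
        continuous_const)).continuousOn
    have step1 : ∑ j ∈ Finset.range n, mtCoeff a f j * mtFun a j z
        = (1 / (2 * Real.pi) : ℂ) * ∑ j ∈ Finset.range n,
            ∫ y in (-Real.pi)..Real.pi,
              f y * (starRingEnd ℂ (mtFun a j (Complex.exp ((y : ℂ) * Complex.I))) *
                mtFun a j z) := by
      rw [Finset.mul_sum]
      refine Finset.sum_congr rfl fun j _ => ?_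
      simp only [mtCoeff, circInner]
      rw [mul_assoc, ← intervalIntegral.integral_mul_const]
      simp only [mul_assoc]
    have step2 : ∑ j ∈ Finset.range n,
        (∫ y in (-Real.pi)..Real.pi,
          f y * (starRingEnd ℂ (mtFun a j (Complex.exp ((y : ℂ) * Complex.I))) * mtFun a j z))
        = ∫ y in (-Real.pi)..Real.pi, ∑ j ∈ Finset.range n,
            f y * (starRingEnd ℂ (mtFun a j (Complex.exp ((y : ℂ) * Complex.I))) *
              mtFun a j z) :=
      (intervalIntegral.integral_finset_sum hInt).symm
    rw [step1, step2]
    congr 1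
    apply intervalIntegral.integral_congr_ae
    have hcnt : Set.Countable {y : ℝ |
        Complex.exp ((y : ℂ) * Complex.I) = Complex.exp ((x : ℂ) * Complex.I)} := by
      apply Set.Countable.mono _ (Set.countable_range fun k : ℤ => x + k * (2 * Real.pi))
      intro y hy
      rw [Set.mem_setOf_eq, Complex.exp_eq_exp_iff_exists_int] at hy
      obtain ⟨k, hk⟩ := hy
      refine ⟨k, ?_⟩
      have h2 : ((x + k * (2 * Real.pi) : ℝ) : ℂ) * Complex.I = (y : ℂ) * Complex.I := by
        push_cast
        rw [hk]
        ring
      have h3 := mul_right_cancel₀ Complex.I_ne_zero h2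
      exact_mod_cast h3
    have hmeas : volume {y : ℝ |
        Complex.exp ((y : ℂ) * Complex.I) = Complex.exp ((x : ℂ) * Complex.I)} = 0 :=
      hcnt.measure_zero _
    have hae : ∀ᵐ y : ℝ,
        ¬ Complex.exp ((y : ℂ) * Complex.I) = Complex.exp ((x : ℂ) * Complex.I) :=
      measure_eq_zero_iff_ae_notMem.mp hmeas
    filter_upwards [hae] with y hy _
    have hcd := cd_main a ha n x y (fun h => hy h.symm)
    rw [← Finset.mul_sum]
    congr 1
    rw [← hcd]
    exact Finset.sum_congr rfl fun j _ => (mul_comm _ _)
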